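/- Let l be a nonnegative integer, x ≥ 1 a real number, and s a complex number with |s| ≤ 1/log x (for x > 1; for x near 1 interpret suitably). Then the sum over positive integers n ≤ x of n^{-(1+s)} (log(x/n))^l equals (log x)^{l+1} x^{-s} ∫₀¹ x^{s a} a^l da + O((log 3x)^l), where the implied constant depends only on l. -/

import Mathlib

open Complex MeasureTheory intervalIntegral
open Set

noncomputable section Stmt0Aux

variable (l : ℕ) (x : ℝ) (s : ℂ)

def gg (t : ℝ) : ℂ := (t:ℂ) ^ (-(1+s)) * ((Real.log x - Real.log t : ℝ) : ℂ) ^ l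

def DD (t : ℝ) : ℂ :=
  -(1+s) * (t:ℂ) ^ (-(1+s)-1) * ((Real.log x - Real.log t : ℝ) : ℂ) ^ l
    - (t:ℂ) ^ (-(1+s)) * ((l : ℂ) * ((Real.log x - Real.log t : ℝ) : ℂ) ^ (l-1) * (t:ℂ)⁻¹)

theorem gg_hasDeriv {t : ℝ} (ht : 0 < t) : HasDerivAt (gg l x s) (DD l x s t) t := by
  have hp : HasDerivAt (fun t : ℝ => (t:ℂ) ^ (-(1+s)))
      (-(1+s) * (t:ℂ) ^ (-(1+s)-1)) t :=
    ((Complex.hasStrictDerivAt_cpow_const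
      (Complex.ofReal_mem_slitPlane.mpr ht)).hasDerivAt).comp_ofReal
  have hlog : HasDerivAt (fun t : ℝ => Real.log x - Real.log t) (-t⁻¹) t := by
    simpa using (Real.hasDerivAt_log ht.ne').const_sub (Real.log x)
  have hu : HasDerivAt (fun t : ℝ => (Real.log x - Real.log t) ^ l)
      ((l : ℝ) * (Real.log x - Real.log t) ^ (l-1) * (-t⁻¹)) t := hlog.pow l
  have huC : HasDerivAt (fun t : ℝ => (((Real.log x - Real.log t) ^ l : ℝ) : ℂ))
      (((l : ℝ) * (Real.log x - Real.log t) ^ (l-1) * (-t⁻¹) : ℝ) : ℂ) t := hu.ofReal_comp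
  have := hp.mul huC
  unfold gg DD
  exact (this.congr_deriv (by push_cast; ring)).congr_of_eventuallyEq
    (Filter.Eventually.of_forall fun u => by simp only [Pi.mul_apply]; push_cast; ring)

theorem DD_contOn : ContinuousOn (DD l x s) (Set.Ioi 0) := by
  have hc : ∀ c : ℂ, ContinuousOn (fun t:ℝ => (t:ℂ) ^ c) (Set.Ioi (0:ℝ)) := fun c t ht =>
    ((continuousAt_cpow_const (Complex.ofReal_mem_slitPlane.mpr ht)).comp
      Complex.continuous_ofReal.continuousAt).continuousWithinAt
  have hlog : ContinuousOn (fun t:ℝ => ((Real.log x - Real.log t : ℝ):ℂ)) (Set.Ioi 0) :=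
    Complex.continuous_ofReal.comp_continuousOn (continuousOn_const.sub
      (Real.continuousOn_log.mono (fun t ht => ne_of_gt ht)))
  have hinv : ContinuousOn (fun t:ℝ => ((t:ℂ))⁻¹) (Set.Ioi 0) :=
    (Complex.continuous_ofReal.continuousOn).inv₀
      (fun t ht => by exact_mod_cast (ne_of_gt (ht : (0:ℝ) < t)))
  exact ((continuousOn_const.mul (hc _)).mul (hlog.pow l)).sub
    ((hc _).mul ((continuousOn_const.mul (hlog.pow (l-1))).mul hinv))

theorem gg_contOn : ContinuousOn (gg l x s) (Set.Ioi 0) := fun t ht =>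
  (gg_hasDeriv l x s ht).continuousAt.continuousWithinAt

variable {x s}

theorem norm_cpow1 (hx : 1 ≤ x) (hs : ‖s‖ * Real.log x ≤ 1) {t : ℝ} (ht : 1 ≤ t) (htx : t ≤ x) :
    ‖(t:ℂ) ^ (-(1+s))‖ ≤ Real.exp 1 / t ∧ ‖(t:ℂ) ^ (-(1+s)-1)‖ ≤ Real.exp 1 / t^2 := by
  have ht0 : (0:ℝ) < t := lt_of_lt_of_le one_pos ht
  have hlogt : 0 ≤ Real.log t := Real.log_nonneg ht
  have hkey : t ^ (-s.re) ≤ Real.exp 1 := by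
    rw [Real.rpow_def_of_pos ht0]
    apply Real.exp_le_exp.mpr
    calc Real.log t * -s.re ≤ |Real.log t * -s.re| := le_abs_self _
      _ = |s.re| * Real.log t := by rw [abs_mul, _root_.abs_of_nonneg hlogt, abs_neg]; ring
      _ ≤ ‖s‖ * Real.log x :=
          mul_le_mul (Complex.abs_re_le_norm s) (Real.log_le_log ht0 htx) hlogt (norm_nonneg s)
      _ ≤ 1 := hs
  constructor
  · rw [Complex.norm_cpow_eq_rpow_re_of_pos ht0,
      show (-(1+s)).re = (-1) + (-s.re) by simp [Complex.add_re]; ring,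
      Real.rpow_add ht0, Real.rpow_neg_one, div_eq_mul_inv, mul_comm (Real.exp 1)]
    exact mul_le_mul_of_nonneg_left hkey (by positivity)
  · rw [Complex.norm_cpow_eq_rpow_re_of_pos ht0,
      show (-(1+s)-1).re = (-2) + (-s.re) by simp [Complex.add_re, Complex.sub_re]; ring,
      Real.rpow_add ht0, div_eq_mul_inv, mul_comm (Real.exp 1),
      show ((-2:ℝ)) = ((-2:ℤ):ℝ) by norm_num, Real.rpow_intCast,
      show ((t:ℝ)^(-2:ℤ)) = (t^2)⁻¹ by simp [zpow_neg]]
    exact mul_le_mul_of_nonneg_left hkey (by positivity)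

theorem DD_norm_le (hx : 1 ≤ x) (hs : ‖s‖ * Real.log x ≤ 1) {t : ℝ} (ht : 1 ≤ t) (htx : t ≤ x) :
    ‖DD l x s t‖ ≤
      Real.exp 1 * ((1 + ‖s‖) * (Real.log x)^l + l * (Real.log x)^(l-1)) / t^2 := by
  have ht0 : (0:ℝ) < t := lt_of_lt_of_le one_pos ht
  obtain ⟨h1, h2⟩ := norm_cpow1 hx hs ht htx
  have hL0 : 0 ≤ Real.log x := Real.log_nonneg hx
  have hA : ‖((Real.log x - Real.log t : ℝ):ℂ)‖ ≤ Real.log x := by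
    rw [Complex.norm_real, Real.norm_eq_abs,
      _root_.abs_of_nonneg (sub_nonneg.mpr (Real.log_le_log ht0 htx))]
    have := Real.log_nonneg ht; linarith
  have hAl : ‖((Real.log x - Real.log t : ℝ):ℂ)‖^l ≤ (Real.log x)^l :=
    pow_le_pow_left₀ (norm_nonneg _) hA l
  have hAl1 : ‖((Real.log x - Real.log t : ℝ):ℂ)‖^(l-1) ≤ (Real.log x)^(l-1) :=
    pow_le_pow_left₀ (norm_nonneg _) hA (l-1)
  have hinv : ‖((t:ℂ))⁻¹‖ = t⁻¹ := by
    rw [norm_inv, Complex.norm_real, Real.norm_eq_abs, abs_of_pos ht0]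
  have hns : ‖-(1+s)‖ ≤ 1 + ‖s‖ := by
    rw [norm_neg]; exact le_trans (norm_add_le _ _) (by simp)
  calc ‖DD l x s t‖ ≤ ‖-(1+s) * (t:ℂ) ^ (-(1+s)-1) * ((Real.log x - Real.log t : ℝ) : ℂ) ^ l‖
        + ‖(t:ℂ) ^ (-(1+s)) * ((l : ℂ) * ((Real.log x - Real.log t : ℝ) : ℂ) ^ (l-1) * (t:ℂ)⁻¹)‖ :=
      norm_sub_le _ _
    _ ≤ (1 + ‖s‖) * (Real.exp 1 / t^2) * (Real.log x)^l
        + (Real.exp 1 / t) * ((l:ℝ) * (Real.log x)^(l-1) * t⁻¹) := by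
      simp only [norm_mul, norm_pow, hinv, Complex.norm_natCast]
      gcongr <;> first | exact norm_nonneg _ | exact hns | exact h1 | exact h2 | exact hA | positivity
    _ = Real.exp 1 * ((1 + ‖s‖) * (Real.log x)^l + l * (Real.log x)^(l-1)) / t^2 := by
      field_simp

end Stmt0Aux

def cc : ℕ → ℂ := fun k => if k = 0 then 0 else 1

theorem sum_cc (n : ℕ) : ∑ k ∈ Finset.Icc 0 n, cc k = (n:ℂ) := by
  induction n with
  | zero => simp [cc]
  | succ n ih =>
      rw [Finset.sum_Icc_succ_top (Nat.zero_le _), ih]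
      simp [cc]

theorem floor_mul_integrable (hx : 1 ≤ x) {a b : ℝ} (hsub : Set.Icc a b ⊆ Set.Icc 2⁻¹ x)
    (hint : IntegrableOn (deriv (gg l x s)) (Set.Icc (2⁻¹:ℝ) x)) :
    IntegrableOn (fun t => (⌊t⌋₊:ℂ) * deriv (gg l x s) t) (Set.Icc a b) := by
  refine Integrable.bdd_mul (c := x + 1) (hint.mono_set hsub)
    ((measurable_from_nat.comp Nat.measurable_floor).aestronglyMeasurable) ?_
  refine (ae_restrict_iff' measurableSet_Icc).mpr (Filter.Eventually.of_forall fun t ht => ?_)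
  have h1 : t ≤ x := ((hsub ht).2)
  have h0 : (0:ℝ) ≤ t := le_trans (by norm_num) (hsub ht).1
  rw [Complex.norm_natCast]
  have := Nat.floor_le h0
  linarith

theorem sum_eq (hx : 1 ≤ x) :
    ∑ n ∈ Finset.Icc 1 ⌊x⌋₊, gg l x s n
      = gg l x s x * (⌊x⌋₊:ℂ) - ∫ t in Set.Ioc (1:ℝ) x, (⌊t⌋₊:ℂ) * DD l x s t := by
  have h2x : (2⁻¹:ℝ) ≤ x := le_trans (by norm_num) hx
  have hf0 : ⌊(2⁻¹:ℝ)⌋₊ = 0 := Nat.floor_eq_zero.mpr (by norm_num)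
  have hdiff : ∀ t ∈ Set.Icc (2⁻¹:ℝ) x, DifferentiableAt ℝ (gg l x s) t := fun t ht =>
    (gg_hasDeriv l x s (lt_of_lt_of_le (by norm_num) ht.1)).differentiableAt
  have hderiv_eq : ∀ t : ℝ, 0 < t → deriv (gg l x s) t = DD l x s t := fun t ht =>
    (gg_hasDeriv l x s ht).deriv
  have hint : IntegrableOn (deriv (gg l x s)) (Set.Icc (2⁻¹:ℝ) x) := by
    apply ContinuousOn.integrableOn_Icc
    refine ((DD_contOn l x s).mono ?_).congr fun t ht => hderiv_eq t (lt_of_lt_of_le (by norm_num) ht.1)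
    exact fun t ht => lt_of_lt_of_le (by norm_num) ht.1
  have key := sum_mul_eq_sub_sub_integral_mul cc (by norm_num : (0:ℝ) ≤ 2⁻¹) h2x hdiff hint
  rw [hf0] at key
  simp only [sum_cc, Nat.cast_zero, mul_zero, sub_zero] at key
  have hsum : ∑ k ∈ Finset.Ioc 0 ⌊x⌋₊, gg l x s ↑k * cc k
      = ∑ n ∈ Finset.Icc 1 ⌊x⌋₊, gg l x s n := by
    rw [← Finset.Icc_add_one_left_eq_Ioc]
    refine Finset.sum_congr rfl fun k hk => ?_
    have hk1 : k ≠ 0 := by have := (Finset.mem_Icc.mp hk).1; omega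
    rw [show cc k = 1 from if_neg hk1, mul_one]
  rw [hsum] at key
  rw [key]
  congr 1
  have hmc : ∫ t in Set.Ioc (2⁻¹:ℝ) x, deriv (gg l x s) t * ((⌊t⌋₊:ℕ):ℂ)
      = ∫ t in Set.Ioc (2⁻¹:ℝ) x, ((⌊t⌋₊:ℕ):ℂ) * deriv (gg l x s) t := by
    simp_rw [mul_comm]
  rw [hmc]
  have hI1 : IntegrableOn (fun t => (⌊t⌋₊:ℂ) * deriv (gg l x s) t) (Set.Ioc (2⁻¹:ℝ) 1) :=
    (floor_mul_integrable hx (Set.Icc_subset_Icc_right hx) hint).mono_set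
      Set.Ioc_subset_Icc_self
  have hI2 : IntegrableOn (fun t => (⌊t⌋₊:ℂ) * deriv (gg l x s) t) (Set.Ioc (1:ℝ) x) :=
    (floor_mul_integrable hx (Set.Icc_subset_Icc_left (by norm_num : (2⁻¹:ℝ) ≤ 1)) hint).mono_set
      Set.Ioc_subset_Icc_self
  rw [← Set.Ioc_union_Ioc_eq_Ioc (by norm_num : (2⁻¹:ℝ) ≤ 1) hx,
    setIntegral_union (Set.Ioc_disjoint_Ioc_of_le le_rfl) measurableSet_Ioc hI1 hI2]
  have hzero : ∫ t in Set.Ioc (2⁻¹:ℝ) 1, (⌊t⌋₊:ℂ) * deriv (gg l x s) t = 0 := by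
    apply integral_eq_zero_of_ae
    have hne : ∀ᵐ t : ℝ ∂(volume.restrict (Set.Ioc (2⁻¹:ℝ) 1)), t ≠ 1 := by
      refine ae_restrict_of_ae ?_
      rw [MeasureTheory.ae_iff]
      convert Real.volume_singleton (a := (1:ℝ)) using 2
      ext t; simp
    filter_upwards [ae_restrict_mem measurableSet_Ioc, hne] with t ht hne1
    have : ⌊t⌋₊ = 0 := Nat.floor_eq_zero.mpr (lt_of_le_of_ne ht.2 hne1)
    simp [this]
  rw [hzero, zero_add]
  refine setIntegral_congr_fun measurableSet_Ioc fun t ht => ?_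
  rw [hderiv_eq t (lt_trans one_pos ht.1)]

theorem hconts (hx : 1 ≤ x) :
    IntervalIntegrable (fun t => (t:ℂ) * DD l x s t) volume 1 x ∧
    IntervalIntegrable (gg l x s) volume 1 x := by
  have hsub : Set.uIcc (1:ℝ) x ⊆ Set.Ioi 0 := by
    rw [Set.uIcc_of_le hx]; exact fun t ht => lt_of_lt_of_le one_pos ht.1
  exact ⟨ContinuousOn.intervalIntegrable
      ((Complex.continuous_ofReal.continuousOn).mul ((DD_contOn l x s).mono hsub)),
    ContinuousOn.intervalIntegrable ((gg_contOn l x s).mono hsub)⟩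

theorem parts (hx : 1 ≤ x) :
    ∫ t in (1:ℝ)..x, gg l x s t
      = x * gg l x s x - gg l x s 1 - ∫ t in (1:ℝ)..x, (t:ℂ) * DD l x s t := by
  have hsub : Set.uIcc (1:ℝ) x ⊆ Set.Ioi 0 := by
    rw [Set.uIcc_of_le hx]; exact fun t ht => lt_of_lt_of_le one_pos ht.1
  have hderiv : ∀ t ∈ Set.uIcc (1:ℝ) x,
      HasDerivAt (fun t : ℝ => (t:ℂ) * gg l x s t) (gg l x s t + (t:ℂ) * DD l x s t) t := by
    intro t ht
    have h1 : HasDerivAt (fun t : ℝ => ((t:ℝ):ℂ)) 1 t := by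
      simpa using (hasDerivAt_id t).ofReal_comp
    have := h1.mul (gg_hasDeriv l x s (hsub ht))
    exact (this.congr_deriv (by ring)).congr_of_eventuallyEq (Filter.Eventually.of_forall fun u => rfl)
  obtain ⟨hdi, hgi⟩ := hconts hx
  have key := integral_eq_sub_of_hasDerivAt hderiv (hgi.add hdi)
  rw [integral_add hgi hdi] at key
  push_cast at key ⊢
  linear_combination key

theorem combine (hx : 1 ≤ x) :
    (∑ n ∈ Finset.Icc 1 ⌊x⌋₊, gg l x s n) - ∫ t in (1:ℝ)..x, gg l x s t
      = gg l x s x * ((⌊x⌋₊:ℂ) - x) + gg l x s 1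
        + ∫ t in (1:ℝ)..x, ((t - ⌊t⌋₊ : ℝ):ℂ) * DD l x s t := by
  rw [sum_eq hx, parts hx]
  obtain ⟨hdi, hgi⟩ := hconts hx
  have hfi : IntervalIntegrable (fun t => (⌊t⌋₊:ℂ) * DD l x s t) volume 1 x := by
    rw [intervalIntegrable_iff_integrableOn_Icc_of_le hx]
    have hint : IntegrableOn (deriv (gg l x s)) (Set.Icc (2⁻¹:ℝ) x) := by
      apply ContinuousOn.integrableOn_Icc
      refine ((DD_contOn l x s).mono ?_).congr
        fun t ht => (gg_hasDeriv l x s (lt_of_lt_of_le (by norm_num) ht.1)).deriv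
      exact fun t ht => lt_of_lt_of_le (by norm_num) ht.1
    refine (floor_mul_integrable hx (Set.Icc_subset_Icc_left (by norm_num : (2⁻¹:ℝ) ≤ 1))
      hint).congr_fun (fun t ht => ?_) measurableSet_Icc
    dsimp only
    rw [(gg_hasDeriv l x s (lt_of_lt_of_le one_pos ht.1)).deriv]
  have hIoc : ∫ t in Set.Ioc (1:ℝ) x, (⌊t⌋₊:ℂ) * DD l x s t
      = ∫ t in (1:ℝ)..x, (⌊t⌋₊:ℂ) * DD l x s t := (integral_of_le hx).symm
  rw [hIoc]
  have hsplit : ∫ t in (1:ℝ)..x, ((t - ⌊t⌋₊ : ℝ):ℂ) * DD l x s t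
      = (∫ t in (1:ℝ)..x, (t:ℂ) * DD l x s t)
        - ∫ t in (1:ℝ)..x, (⌊t⌋₊:ℂ) * DD l x s t := by
    rw [← intervalIntegral.integral_sub hdi hfi]
    congr 1; funext t; push_cast; ring
  rw [hsplit]; ring

theorem err_bound (hx : 1 ≤ x) (hs : ‖s‖ * Real.log x ≤ 1) :
    ‖(∑ n ∈ Finset.Icc 1 ⌊x⌋₊, gg l x s n) - ∫ t in (1:ℝ)..x, gg l x s t‖
      ≤ (3*l+13) * (Real.log (3*x))^l := by
  have hx0 : (0:ℝ) < x := lt_of_lt_of_le one_pos hx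
  have hL0 : 0 ≤ Real.log x := Real.log_nonneg hx
  have he3 : Real.exp 1 ≤ 3 := by
    have := Real.exp_one_lt_d9; linarith
  have hL3 : 1 ≤ Real.log (3*x) := by
    rw [Real.le_log_iff_exp_le (by positivity)]
    nlinarith [Real.exp_one_lt_d9]
  have hLle : Real.log x ≤ Real.log (3*x) := Real.log_le_log hx0 (by linarith)
  have hLpow : (Real.log x)^l ≤ (Real.log (3*x))^l := pow_le_pow_left₀ hL0 hLle l
  have hLpow1 : (Real.log x)^(l-1) ≤ (Real.log (3*x))^l :=
    le_trans (pow_le_pow_left₀ hL0 hLle (l-1)) (pow_le_pow_right₀ (by linarith) (Nat.sub_le l 1))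
  have hL3l : 1 ≤ (Real.log (3*x))^l := one_le_pow₀ hL3
  rw [combine hx]
  -- Term 1
  have hT1 : ‖gg l x s x * ((⌊x⌋₊:ℂ) - x)‖ ≤ 3 := by
    rw [norm_mul]
    have h1 : ‖gg l x s x‖ ≤ 3 := by
      unfold gg
      rw [norm_mul]
      have hcp := (norm_cpow1 hx hs hx le_rfl).1
      have h2 : ‖((Real.log x - Real.log x : ℝ):ℂ)^l‖ ≤ 1 := by
        simp only [sub_self, Complex.ofReal_zero, norm_pow, norm_zero]
        exact pow_le_one₀ le_rfl zero_le_one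
      have hex : Real.exp 1 / x ≤ 3 := by
        rw [div_le_iff₀ hx0]; nlinarith
      calc ‖(x:ℂ) ^ (-(1+s))‖ * ‖((Real.log x - Real.log x : ℝ):ℂ)^l‖
          ≤ (Real.exp 1 / x) * 1 := mul_le_mul hcp h2 (norm_nonneg _) (by positivity)
        _ ≤ 3 := by rw [mul_one]; exact hex
    have h2 : ‖((⌊x⌋₊:ℂ) - x)‖ ≤ 1 := by
      have heq : ((⌊x⌋₊:ℂ) - x) = (((⌊x⌋₊:ℝ) - x : ℝ):ℂ) := by push_cast; ring
      rw [heq, Complex.norm_real, Real.norm_eq_abs, abs_sub_comm,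
        _root_.abs_of_nonneg (sub_nonneg.mpr (Nat.floor_le hx0.le))]
      have := Nat.lt_floor_add_one x; linarith
    calc ‖gg l x s x‖ * ‖((⌊x⌋₊:ℂ) - x)‖ ≤ 3 * 1 :=
        mul_le_mul h1 h2 (norm_nonneg _) (by norm_num)
      _ = 3 := by norm_num
  -- Term 2
  have hT2 : ‖gg l x s 1‖ ≤ (Real.log (3*x))^l := by
    unfold gg
    rw [Complex.ofReal_one, one_cpow, one_mul, norm_pow, Complex.norm_real, Real.norm_eq_abs,
      Real.log_one, sub_zero, _root_.abs_of_nonneg hL0]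
    exact hLpow
  -- Term 3
  set K := Real.exp 1 * ((1 + ‖s‖) * (Real.log x)^l + l * (Real.log x)^(l-1)) with hK
  have hKnn : 0 ≤ K := by positivity
  have hxinv0 : 0 ≤ x⁻¹ := by positivity
  have hxinv1 : x⁻¹ ≤ 1 := by
    rw [← one_div]; exact div_le_one_of_le₀ hx hx0.le
  have hx1 : 0 ≤ 1 - x⁻¹ := by linarith
  have hx2 : 1 - x⁻¹ ≤ 1 := by linarith
  have hx3 : 1 - x⁻¹ ≤ Real.log x := by
    have := Real.log_le_sub_one_of_pos (show (0:ℝ) < x⁻¹ by positivity)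
    rw [Real.log_inv] at this; linarith
  have hT3 : ‖∫ t in (1:ℝ)..x, ((t - ⌊t⌋₊ : ℝ):ℂ) * DD l x s t‖
      ≤ 3*(l+2) * (Real.log (3*x))^l := by
    have hb : IntervalIntegrable (fun t => K / t^2) volume 1 x := by
      apply ContinuousOn.intervalIntegrable
      apply continuousOn_const.div (continuousOn_pow 2)
      rw [Set.uIcc_of_le hx]
      intro t ht
      exact pow_ne_zero 2 (ne_of_gt (lt_of_lt_of_le one_pos ht.1))
    have hae : ∀ᵐ t ∂(volume.restrict (Set.uIoc (1:ℝ) x)),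
        ‖((t - ⌊t⌋₊ : ℝ):ℂ) * DD l x s t‖ ≤ K / t^2 := by
      rw [Set.uIoc_of_le hx]
      refine (ae_restrict_iff' measurableSet_Ioc).mpr (Filter.Eventually.of_forall fun t ht => ?_)
      have ht0 : (0:ℝ) < t := lt_trans one_pos ht.1
      rw [norm_mul, Complex.norm_real, Real.norm_eq_abs,
        _root_.abs_of_nonneg (sub_nonneg.mpr (Nat.floor_le ht0.le))]
      have hfr : t - ⌊t⌋₊ ≤ 1 := by have := Nat.lt_floor_add_one t; linarith
      calc (t - ⌊t⌋₊) * ‖DD l x s t‖ ≤ 1 * (K / t^2) :=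
          mul_le_mul hfr (DD_norm_le l hx hs ht.1.le ht.2) (norm_nonneg _) (by norm_num)
        _ = K / t^2 := by ring
    have hbd := intervalIntegral.norm_integral_le_abs_of_norm_le hae hb
    refine le_trans hbd ?_
    have hval : ∫ t in (1:ℝ)..x, K / t^2 = K * (1 - x⁻¹) := by
      have heq : ∀ t : ℝ, K / t^2 = K * (t:ℝ)^(-2:ℤ) := by
        intro t; rw [zpow_neg, div_eq_mul_inv]; norm_cast
      simp_rw [heq]
      rw [intervalIntegral.integral_const_mul, integral_zpow (Or.inr ⟨by norm_num,
        by rw [Set.uIcc_of_le hx]; intro h; have := h.1; norm_num at this⟩)]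
      congr 1
      norm_num
      ring
    rw [hval, _root_.abs_of_nonneg (by positivity : 0 ≤ K * (1 - x⁻¹))]
    have hsplit : K * (1 - x⁻¹)
        = Real.exp 1 * (1-x⁻¹) * (Real.log x)^l
          + Real.exp 1 * (‖s‖*(1-x⁻¹)) * (Real.log x)^l
          + Real.exp 1 * l * ((1-x⁻¹) * (Real.log x)^(l-1)) := by rw [hK]; ring
    have hmid : ‖s‖ * (1-x⁻¹) ≤ 1 :=
      le_trans (mul_le_mul_of_nonneg_left hx3 (norm_nonneg s)) hs
    have hepos : (0:ℝ) < Real.exp 1 := Real.exp_pos 1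
    have hc1 : Real.exp 1 * (1-x⁻¹) ≤ 3 := by nlinarith
    have e1 : Real.exp 1 * (1-x⁻¹) * (Real.log x)^l ≤ 3 * (Real.log (3*x))^l := by
      calc Real.exp 1 * (1-x⁻¹) * (Real.log x)^l ≤ 3 * (Real.log x)^l :=
          mul_le_mul_of_nonneg_right hc1 (pow_nonneg hL0 l)
        _ ≤ 3 * (Real.log (3*x))^l := by linarith
    have hc2 : Real.exp 1 * (‖s‖*(1-x⁻¹)) ≤ 3 := by
      nlinarith [mul_nonneg (norm_nonneg s) hx1]
    have e2 : Real.exp 1 * (‖s‖*(1-x⁻¹)) * (Real.log x)^l ≤ 3 * (Real.log (3*x))^l := by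
      calc Real.exp 1 * (‖s‖*(1-x⁻¹)) * (Real.log x)^l ≤ 3 * (Real.log x)^l :=
          mul_le_mul_of_nonneg_right hc2 (pow_nonneg hL0 l)
        _ ≤ 3 * (Real.log (3*x))^l := by linarith
    have e3 : Real.exp 1 * l * ((1-x⁻¹) * (Real.log x)^(l-1)) ≤ 3 * l * (Real.log (3*x))^l := by
      have h1 : (1-x⁻¹) * (Real.log x)^(l-1) ≤ (Real.log (3*x))^l := by
        calc (1-x⁻¹) * (Real.log x)^(l-1) ≤ 1 * (Real.log (3*x))^l :=
            mul_le_mul hx2 hLpow1 (by positivity) (by norm_num)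
          _ = (Real.log (3*x))^l := by ring
      calc Real.exp 1 * l * ((1-x⁻¹) * (Real.log x)^(l-1))
          ≤ Real.exp 1 * l * (Real.log (3*x))^l :=
            mul_le_mul_of_nonneg_left h1 (by positivity)
        _ ≤ 3 * l * (Real.log (3*x))^l :=
            mul_le_mul_of_nonneg_right
              (mul_le_mul_of_nonneg_right he3 (Nat.cast_nonneg l)) (by positivity)
    rw [hsplit]
    calc _ ≤ 3 * (Real.log (3*x))^l + 3 * (Real.log (3*x))^l + 3*l*(Real.log (3*x))^l :=
        add_le_add (add_le_add e1 e2) e3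
      _ ≤ 3*(l+2) * (Real.log (3*x))^l := by ring_nf; linarith
  calc ‖gg l x s x * ((⌊x⌋₊:ℂ) - x) + gg l x s 1
        + ∫ t in (1:ℝ)..x, ((t - ⌊t⌋₊ : ℝ):ℂ) * DD l x s t‖
      ≤ ‖gg l x s x * ((⌊x⌋₊:ℂ) - x) + gg l x s 1‖
        + ‖∫ t in (1:ℝ)..x, ((t - ⌊t⌋₊ : ℝ):ℂ) * DD l x s t‖ := norm_add_le _ _
    _ ≤ (‖gg l x s x * ((⌊x⌋₊:ℂ) - x)‖ + ‖gg l x s 1‖)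
        + ‖∫ t in (1:ℝ)..x, ((t - ⌊t⌋₊ : ℝ):ℂ) * DD l x s t‖ :=
        add_le_add_left (norm_add_le _ _) _
    _ ≤ (3 + (Real.log (3*x))^l) + 3*(l+2)*(Real.log (3*x))^l :=
        add_le_add (add_le_add hT1 hT2) hT3
    _ ≤ (3*l+13) * (Real.log (3*x))^l := by nlinarith [hL3l]

theorem int_eq (hx : 1 ≤ x) :
    ∫ t in (1:ℝ)..x, gg l x s t
      = ((Real.log x : ℝ):ℂ)^(l+1) * (x:ℂ)^(-s)
        * ∫ a in (0:ℝ)..1, (x:ℂ)^(s*(a:ℝ)) * ((a:ℝ):ℂ)^l := by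
  rcases eq_or_lt_of_le hx with h1 | h1
  · rw [← h1]
    simp [Real.log_one]
  have hx0 : (0:ℝ) < x := by linarith
  have hL : 0 < Real.log x := Real.log_pos h1
  have hLne : Real.log x ≠ 0 := ne_of_gt hL
  have hxC : (x:ℂ) ≠ 0 := by exact_mod_cast ne_of_gt hx0
  set φ : ℝ → ℝ := fun t => 1 - Real.log t / Real.log x with hφ
  have hder : ∀ t ∈ Set.uIcc (1:ℝ) x, HasDerivAt φ (-(t⁻¹ / Real.log x)) t := by
    intro t ht
    rw [Set.uIcc_of_le hx] at ht
    have ht0 : (0:ℝ) < t := lt_of_lt_of_le one_pos ht.1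
    simpa [hφ] using ((Real.hasDerivAt_log ht0.ne').div_const (Real.log x)).const_sub 1
  have hcont : ContinuousOn (fun t : ℝ => -(t⁻¹ / Real.log x)) (Set.uIcc (1:ℝ) x) := by
    rw [Set.uIcc_of_le hx]
    exact (((continuousOn_id (s := Set.Icc (1:ℝ) x)).inv₀
      (fun t ht => ne_of_gt (lt_of_lt_of_le one_pos ht.1))).div_const _).neg
  have hG : Continuous (fun a : ℝ => (x:ℂ)^(s*(a:ℝ)) * ((a:ℝ):ℂ)^l) :=
    (Continuous.const_cpow (continuous_const.mul Complex.continuous_ofReal)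
      (Or.inl hxC)).mul (Complex.continuous_ofReal.pow l)
  have key := integral_comp_smul_deriv hder hcont hG
  have hφ1 : φ 1 = 1 := by simp [hφ]
  have hφx : φ x = 0 := by simp [hφ]; field_simp; norm_num
  rw [hφ1, hφx] at key
  have h01 : ∫ a in (0:ℝ)..1, (x:ℂ)^(s*(a:ℝ)) * ((a:ℝ):ℂ)^l
      = -∫ t in (1:ℝ)..x,
          (-(t⁻¹ / Real.log x)) • ((x:ℂ)^(s*(φ t:ℝ)) * ((φ t:ℝ):ℂ)^l) := by
    simp only [Function.comp_def] at key
    rw [key]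
    exact integral_symm 1 0
  rw [h01]
  rw [show ((Real.log x : ℝ):ℂ)^(l+1) * (x:ℂ)^(-s)
        * -∫ t in (1:ℝ)..x, (-(t⁻¹ / Real.log x)) • ((x:ℂ)^(s*(φ t:ℝ)) * ((φ t:ℝ):ℂ)^l)
      = ∫ t in (1:ℝ)..x, ((Real.log x : ℝ):ℂ)^(l+1) * (x:ℂ)^(-s)
          * -((-(t⁻¹ / Real.log x)) • ((x:ℂ)^(s*(φ t:ℝ)) * ((φ t:ℝ):ℂ)^l)) from by
    rw [← intervalIntegral.integral_neg, ← intervalIntegral.integral_const_mul]]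
  refine intervalIntegral.integral_congr fun t ht => ?_
  rw [Set.uIcc_of_le hx] at ht
  have ht0 : (0:ℝ) < t := lt_of_lt_of_le one_pos ht.1
  have htC : (t:ℂ) ≠ 0 := by exact_mod_cast ne_of_gt ht0
  have hLC : ((Real.log x:ℝ):ℂ) ≠ 0 := by exact_mod_cast hLne
  have ex : ∀ w : ℂ, (x:ℂ)^w = Complex.exp (w * ((Real.log x:ℝ):ℂ)) := fun w => by
    rw [Complex.cpow_def_of_ne_zero hxC, ← Complex.ofReal_log hx0.le, mul_comm]
  have het : (t:ℂ)^(-(1+s)) = (↑t)⁻¹ * Complex.exp (-s * ((Real.log t:ℝ):ℂ)) := by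
    rw [show -(1+s) = (-1) + (-s) by ring, Complex.cpow_add _ _ htC, Complex.cpow_neg_one]
    congr 1
    rw [Complex.cpow_def_of_ne_zero htC, ← Complex.ofReal_log ht0.le, mul_comm]
  have hpowφ : ((φ t : ℝ):ℂ)^l
      = ((Real.log x - Real.log t:ℝ):ℂ)^l / ((Real.log x:ℝ):ℂ)^l := by
    rw [← div_pow]
    congr 1
    simp only [hφ]
    push_cast
    field_simp
  have hsum : (-s * ((Real.log x:ℝ):ℂ)) + (s * ((φ t:ℝ):ℂ)) * ((Real.log x:ℝ):ℂ)
      = -s * ((Real.log t:ℝ):ℂ) := by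
    simp only [hφ]
    push_cast
    field_simp
    ring
  unfold gg
  rw [Complex.real_smul, het, hpowφ, ex (-s), ex (s*((φ t:ℝ):ℂ)), ← hsum, Complex.exp_add]
  push_cast
  field_simp
  ring

theorem stmt0 (l : ℕ) :
    ∃ C : ℝ, 0 < C ∧ ∀ (x : ℝ) (s : ℂ), 1 ≤ x → ‖s‖ * Real.log x ≤ 1 →
      ‖(∑ n ∈ Finset.Icc 1 ⌊x⌋₊, (n : ℂ) ^ (-(1 + s)) * (Real.log (x / n)) ^ l)
        - (Real.log x) ^ (l + 1) * (x : ℂ) ^ (-s) *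
            ∫ a in (0:ℝ)..1, (x : ℂ) ^ (s * a) * (a : ℂ) ^ l‖
        ≤ C * (Real.log (3 * x)) ^ l := by
  refine ⟨3*l+13, by positivity, fun x s hx hs => ?_⟩
  have hsum : ∑ n ∈ Finset.Icc 1 ⌊x⌋₊, (n : ℂ) ^ (-(1 + s)) * ((Real.log (x / n) : ℝ):ℂ) ^ l
      = ∑ n ∈ Finset.Icc 1 ⌊x⌋₊, gg l x s n := by
    refine Finset.sum_congr rfl fun n hn => ?_
    have hn1 : 1 ≤ n := (Finset.mem_Icc.mp hn).1
    unfold gg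
    rw [Real.log_div (by positivity) (by exact_mod_cast (by omega : n ≠ 0))]
    push_cast
    ring
  rw [hsum, ← int_eq (l := l) hx]
  exact err_bound (l := l) hx hs
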